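/- Let σ < 0 and let Q̃⁻¹ be the (n+1)×(n+1) matrix with entries (Q̃⁻¹)_{i,j} = 1 − (1 + 1/σ)(−1)^j for 0 ≤ j ≤ i ≤ n, and (Q̃⁻¹)_{i,j} = (−1)^{i+j} − (1 + 1/σ)(−1)^j for 0 ≤ i ≤ j ≤ n. Then for the choice σ = −1, the entries satisfy (Q̃⁻¹)_{i,j} = 1 for j ≤ i and (Q̃⁻¹)_{i,j} = (−1)^{i+j} for i ≤ j; moreover this matrix times Q̃ (the second-order SBP-SAT first-derivative matrix with penalty σ = −1) equals the identity. -/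
import Mathlib

open Matrix

private lemma sum_two {m : ℕ} (f : Fin m → ℝ) (a b : Fin m) (hab : a ≠ b)
    (h : ∀ c, c ≠ a → c ≠ b → f c = 0) : ∑ c, f c = f a + f b := by
  classical
  rw [← Finset.sum_pair hab]
  refine (Finset.sum_subset (Finset.subset_univ _) ?_).symm
  intro x _ hx
  simp only [Finset.mem_insert, Finset.mem_singleton, not_or] at hx
  exact h x hx.1 hx.2

set_option maxHeartbeats 1000000 in
theorem stmt3 (n : ℕ) (hn : 1 ≤ n) (σ : ℝ) (hσ : σ = -1)
    (Qt : Matrix (Fin (n+1)) (Fin (n+1)) ℝ)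
    (hQt : Qt = Matrix.of fun (i j : Fin (n+1)) =>
      if (i : ℕ) = 0 then
        (if (j : ℕ) = 0 then -(1/2) - σ else if (j : ℕ) = 1 then (1/2 : ℝ) else 0)
      else if (i : ℕ) = n then
        (if (j : ℕ) + 1 = n then -(1/2) else if (j : ℕ) = n then 1/2 else 0)
      else
        (if (j : ℕ) + 1 = (i : ℕ) then -(1/2)
         else if (j : ℕ) = (i : ℕ) + 1 then 1/2 else 0))
    (M : Matrix (Fin (n+1)) (Fin (n+1)) ℝ)
    (hM : M = Matrix.of fun (i j : Fin (n+1)) =>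
      if (j : ℕ) ≤ (i : ℕ) then 1 - (1 + 1/σ) * (-1 : ℝ)^(j : ℕ)
      else (-1 : ℝ)^((i : ℕ) + (j : ℕ)) - (1 + 1/σ) * (-1 : ℝ)^(j : ℕ)) :
    (∀ i j : Fin (n+1), M i j =
        if (j : ℕ) ≤ (i : ℕ) then 1 else (-1 : ℝ)^((i : ℕ) + (j : ℕ)))
      ∧ M * Qt = 1 := by
  subst hσ
  have hM' : ∀ i j : Fin (n+1), M i j =
      if (j : ℕ) ≤ (i : ℕ) then 1 else (-1 : ℝ)^((i : ℕ) + (j : ℕ)) := by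
    intro i j
    rw [hM]
    simp only [Matrix.of_apply]
    norm_num
  refine ⟨hM', ?_⟩
  ext i j
  rw [Matrix.mul_apply]
  by_cases hj0 : (j : ℕ) = 0
  · have h1n : (1 : ℕ) < n + 1 := by omega
    have hab : (⟨0, by omega⟩ : Fin (n+1)) ≠ ⟨1, h1n⟩ := by
      simp [Fin.ext_iff]
    rw [sum_two _ ⟨0, by omega⟩ ⟨1, h1n⟩ hab]
    · have hQ0 : Qt ⟨0, by omega⟩ j = 1/2 := by
        rw [hQt]; simp only [Matrix.of_apply]
        split_ifs <;> first | rfl | omega | contradiction | norm_num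
      have hQ1 : Qt ⟨1, h1n⟩ j = -(1/2) := by
        rw [hQt]; simp only [Matrix.of_apply]
        split_ifs <;> first | rfl | omega | contradiction | norm_num
      rw [hQ0, hQ1, hM', hM']
      simp only [Matrix.one_apply, Fin.ext_iff]
      by_cases hi : (i : ℕ) = 0
      · rw [if_pos (by omega), if_neg (by omega), if_pos (by omega), hi]
        norm_num
      · rw [if_pos (by omega), if_pos (by omega), if_neg (by omega)]
        ring
    · intro c hca hcb
      have hc1 : (c : ℕ) ≠ 0 := fun h => hca (Fin.ext h)
      have hc2 : (c : ℕ) ≠ 1 := fun h => hcb (Fin.ext h)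
      have hQc : Qt c j = 0 := by
        rw [hQt]; simp only [Matrix.of_apply]
        split_ifs <;> first | rfl | omega | contradiction
      rw [hQc, mul_zero]
  · by_cases hjn : (j : ℕ) = n
    · have hab : (⟨n-1, by omega⟩ : Fin (n+1)) ≠ ⟨n, by omega⟩ := by
        simp only [ne_eq, Fin.ext_iff]; omega
      rw [sum_two _ ⟨n-1, by omega⟩ ⟨n, by omega⟩ hab]
      · have hQ0 : Qt ⟨n-1, by omega⟩ j = 1/2 := by
          rw [hQt]; simp only [Matrix.of_apply]
          split_ifs <;> first | rfl | omega | contradiction | norm_num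
        have hQ1 : Qt ⟨n, by omega⟩ j = 1/2 := by
          rw [hQt]; simp only [Matrix.of_apply]
          split_ifs <;> first | rfl | omega | contradiction | norm_num
        rw [hQ0, hQ1, hM', hM']
        simp only [Matrix.one_apply, Fin.ext_iff]
        by_cases hin : (i : ℕ) = n
        · rw [if_pos (by omega), if_pos (by omega), if_pos (by omega)]
          norm_num
        · by_cases hin1 : (i : ℕ) = n - 1
          · rw [if_pos (by omega), if_neg (by omega), if_neg (by omega)]
            have h2 : (i : ℕ) + n = 2 * n - 1 := by omega
            have h3 : 2 * n - 1 = 2 * (n-1) + 1 := by omega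
            rw [h2, h3, pow_succ, pow_mul]
            norm_num
          · rw [if_neg (by omega), if_neg (by omega), if_neg (by omega)]
            have h2 : (i : ℕ) + n = (i + (n - 1)) + 1 := by omega
            rw [h2, pow_succ]
            ring
      · intro c hca hcb
        have hc1 : (c : ℕ) ≠ n - 1 := fun h => hca (Fin.ext h)
        have hc2 : (c : ℕ) ≠ n := fun h => hcb (Fin.ext h)
        have hQc : Qt c j = 0 := by
          rw [hQt]; simp only [Matrix.of_apply]
          split_ifs <;> first | rfl | omega | contradiction
        rw [hQc, mul_zero]
    · have hab : (⟨(j:ℕ)-1, by omega⟩ : Fin (n+1)) ≠ ⟨(j:ℕ)+1, by omega⟩ := by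
        simp only [ne_eq, Fin.ext_iff]; omega
      rw [sum_two _ ⟨(j:ℕ)-1, by omega⟩ ⟨(j:ℕ)+1, by omega⟩ hab]
      · have hQ0 : Qt ⟨(j:ℕ)-1, by omega⟩ j = 1/2 := by
          rw [hQt]; simp only [Matrix.of_apply]
          split_ifs <;> first | rfl | omega | contradiction | norm_num
        have hQ1 : Qt ⟨(j:ℕ)+1, by omega⟩ j = -(1/2) := by
          rw [hQt]; simp only [Matrix.of_apply]
          split_ifs <;> first | rfl | omega | contradiction | norm_num
        rw [hQ0, hQ1, hM', hM']
        simp only [Matrix.one_apply, Fin.ext_iff, Fin.val_mk]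
        by_cases hij : (i : ℕ) = (j : ℕ)
        · rw [if_pos (by omega), if_neg (by omega), if_pos (by omega)]
          have h2 : (i : ℕ) + ((j:ℕ) + 1) = 2 * (j:ℕ) + 1 := by omega
          rw [h2, pow_succ, pow_mul]
          norm_num
        · by_cases hgt : (j : ℕ) + 1 ≤ (i : ℕ)
          · rw [if_pos (by omega), if_pos (by omega), if_neg (by omega)]
            ring
          · by_cases hi1 : (i : ℕ) = (j:ℕ) - 1
            · rw [if_pos (by omega), if_neg (by omega), if_neg (by omega)]
              have h2 : (i : ℕ) + ((j:ℕ) + 1) = 2 * (j:ℕ) := by omega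
              rw [h2, pow_mul]
              norm_num
            · rw [if_neg (by omega), if_neg (by omega), if_neg (by omega)]
              have h2 : (i : ℕ) + ((j:ℕ) + 1) = (i + ((j:ℕ) - 1)) + 2 := by omega
              have h3 : ((-1:ℝ))^((i:ℕ)+((j:ℕ)+1)) = (-1)^((i:ℕ)+((j:ℕ)-1)) := by
                rw [h2, pow_add]; norm_num
              rw [h3]; ring
      · intro c hca hcb
        have hc1 : (c : ℕ) ≠ (j:ℕ) - 1 := fun h => hca (Fin.ext h)
        have hc2 : (c : ℕ) ≠ (j:ℕ) + 1 := fun h => hcb (Fin.ext h)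
        have hQc : Qt c j = 0 := by
          rw [hQt]; simp only [Matrix.of_apply]
          split_ifs <;> first | rfl | omega | contradiction
        rw [hQc, mul_zero]
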